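/- Local complementation preserves the bipartition structure up to neighborhoods: if G is bipartite with parts L and R, a ∈ R, b ∈ L, and (a,b) is an edge of G, then the pivot G ∧ ab := ((G ⋆ a) ⋆ b) ⋆ a is bipartite with respect to the partition L Δ {a,b}, R Δ {a,b}. -/

import Mathlib

set_option maxHeartbeats 2000000


variable {V : Type*}

/-- Local complementation at `v`: toggle edges within the neighborhood of `v`. -/
def localComp (G : SimpleGraph V) (v : V) : SimpleGraph V where
  Adj x y := x ≠ y ∧ Xor' (G.Adj x y) (G.Adj v x ∧ G.Adj v y)
  symm := by
    constructor
    rintro x y ⟨hxy, h⟩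
    refine ⟨hxy.symm, ?_⟩
    have := G.adj_comm x y
    unfold Xor' Xor at *
    tauto
  loopless := by constructor; rintro x ⟨h, -⟩; exact h rfl

/-- The pivot of `G` along the edge `ab`: `G ∧ ab = ((G ⋆ a) ⋆ b) ⋆ a`. -/
def pivot (G : SimpleGraph V) (a b : V) : SimpleGraph V :=
  localComp (localComp (localComp G a) b) a

lemma localComp_adj (G : SimpleGraph V) (v x y : V) :
    (localComp G v).Adj x y ↔ x ≠ y ∧ Xor' (G.Adj x y) (G.Adj v x ∧ G.Adj v y) := Iff.rfl

lemma keyLL (G : SimpleGraph V) (a b x y : V)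
    (hab : G.Adj a b) (hba : G.Adj b a) (naa : ¬ G.Adj a a)
    (nxy : ¬ G.Adj x y)
    (nbx : ¬ G.Adj b x) (nby : ¬ G.Adj b y)
    (hax : a ≠ x) (hay : a ≠ y) (hbx : b ≠ x) (hby : b ≠ y) (hba' : b ≠ a) :
    ¬ (pivot G a b).Adj x y := by
  intro h
  simp only [pivot, localComp_adj, Xor', Xor, hab, hba, naa, nxy, nbx, nby,
    ne_eq, hax, hay, hbx, hby, hba'] at h
  tauto

lemma keyLa (G : SimpleGraph V) (a b x : V)
    (hab : G.Adj a b) (hba : G.Adj b a) (naa : ¬ G.Adj a a) (nbb : ¬ G.Adj b b)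
    (nbx : ¬ G.Adj b x)
    (hax : a ≠ x) (hbx : b ≠ x) (hba' : b ≠ a) :
    ¬ (pivot G a b).Adj x a := by
  intro h
  simp only [pivot, localComp_adj, Xor', Xor, hab, hba, naa, nbb, nbx,
    ne_eq, hax, hbx, hba'] at h
  tauto

lemma keyRR (G : SimpleGraph V) (a b x y : V)
    (hab : G.Adj a b) (hba : G.Adj b a) (naa : ¬ G.Adj a a)
    (nxy : ¬ G.Adj x y)
    (nax : ¬ G.Adj a x) (nay : ¬ G.Adj a y)
    (hax : a ≠ x) (hay : a ≠ y) (hbx : b ≠ x) (hby : b ≠ y) (hba' : b ≠ a) :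
    ¬ (pivot G a b).Adj x y := by
  intro h
  simp only [pivot, localComp_adj, Xor', Xor, hab, hba, naa, nxy, nax, nay,
    ne_eq, hax, hay, hbx, hby, hba'] at h
  tauto

lemma keyRb (G : SimpleGraph V) (a b x : V)
    (hab : G.Adj a b) (hba : G.Adj b a) (naa : ¬ G.Adj a a) (nbb : ¬ G.Adj b b)
    (nax : ¬ G.Adj a x)
    (hax : a ≠ x) (hbx : b ≠ x) (hba' : b ≠ a) :
    ¬ (pivot G a b).Adj x b := by
  intro h
  simp only [pivot, localComp_adj, Xor', Xor, hab, hba, naa, nbb, nax,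
    ne_eq, hax, hbx, hba'] at h
  tauto

/-- Pivoting an edge of a bipartite graph with parts `L`, `R` yields a graph that is
bipartite with respect to the partition `L ∆ {a,b}`, `R ∆ {a,b}`. -/
theorem pivot_bipartite (G : SimpleGraph V) (L R : Set V)
    (hdisj : Disjoint L R) (hcover : L ∪ R = Set.univ)
    (hL : ∀ x ∈ L, ∀ y ∈ L, ¬ G.Adj x y)
    (hR : ∀ x ∈ R, ∀ y ∈ R, ¬ G.Adj x y)
    (a b : V) (ha : a ∈ R) (hb : b ∈ L) (hab : G.Adj a b) :
    (∀ x ∈ symmDiff L ({a, b} : Set V), ∀ y ∈ symmDiff L ({a, b} : Set V),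
        ¬ (pivot G a b).Adj x y) ∧
    (∀ x ∈ symmDiff R ({a, b} : Set V), ∀ y ∈ symmDiff R ({a, b} : Set V),
        ¬ (pivot G a b).Adj x y) := by
  have memL : ∀ x, x ∈ symmDiff L ({a, b} : Set V) → (x ∈ L ∧ x ≠ a ∧ x ≠ b) ∨ x = a := by
    intro x hx
    rw [Set.mem_symmDiff] at hx
    rcases hx with ⟨h1, h2⟩ | ⟨h1, h2⟩
    · exact Or.inl ⟨h1, fun e => h2 (by simp [e]), fun e => h2 (by simp [e])⟩
    · simp only [Set.mem_insert_iff, Set.mem_singleton_iff] at h1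
      rcases h1 with e | e
      · exact Or.inr e
      · exact absurd (e ▸ hb) h2
  have memR : ∀ x, x ∈ symmDiff R ({a, b} : Set V) → (x ∈ R ∧ x ≠ a ∧ x ≠ b) ∨ x = b := by
    intro x hx
    rw [Set.mem_symmDiff] at hx
    rcases hx with ⟨h1, h2⟩ | ⟨h1, h2⟩
    · exact Or.inl ⟨h1, fun e => h2 (by simp [e]), fun e => h2 (by simp [e])⟩
    · simp only [Set.mem_insert_iff, Set.mem_singleton_iff] at h1
      rcases h1 with e | e
      · exact absurd (e ▸ ha) h2
      · exact Or.inr e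
  constructor
  · intro x hx y hy
    rcases memL x hx with ⟨hxL, hxa, hxb⟩ | hxa
    · rcases memL y hy with ⟨hyL, hya, hyb⟩ | hya
      · exact keyLL G a b x y hab hab.symm (G.loopless.irrefl a) (hL x hxL y hyL)
          (hL b hb x hxL) (hL b hb y hyL) (Ne.symm hxa) (Ne.symm hya)
          (Ne.symm hxb) (Ne.symm hyb) hab.ne'
      · rw [hya]
        exact keyLa G a b x hab hab.symm (G.loopless.irrefl a) (G.loopless.irrefl b)
          (hL b hb x hxL) (Ne.symm hxa) (Ne.symm hxb) hab.ne'
    · rcases memL y hy with ⟨hyL, hya, hyb⟩ | hya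
      · rw [hxa]
        intro h
        exact keyLa G a b y hab hab.symm (G.loopless.irrefl a) (G.loopless.irrefl b)
          (hL b hb y hyL) (Ne.symm hya) (Ne.symm hyb) hab.ne' h.symm
      · rw [hxa, hya]; intro h; exact h.ne rfl
  · intro x hx y hy
    rcases memR x hx with ⟨hxR, hxa, hxb⟩ | hxb
    · rcases memR y hy with ⟨hyR, hya, hyb⟩ | hyb
      · exact keyRR G a b x y hab hab.symm (G.loopless.irrefl a) (hR x hxR y hyR)
          (hR a ha x hxR) (hR a ha y hyR) (Ne.symm hxa) (Ne.symm hya)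
          (Ne.symm hxb) (Ne.symm hyb) hab.ne'
      · rw [hyb]
        exact keyRb G a b x hab hab.symm (G.loopless.irrefl a) (G.loopless.irrefl b)
          (hR a ha x hxR) (Ne.symm hxa) (Ne.symm hxb) hab.ne'
    · rcases memR y hy with ⟨hyR, hya, hyb⟩ | hyb'
      · rw [hxb]
        intro h
        exact keyRb G a b y hab hab.symm (G.loopless.irrefl a) (G.loopless.irrefl b)
          (hR a ha y hyR) (Ne.symm hya) (Ne.symm hyb) hab.ne' h.symm
      · rw [hxb, hyb']; intro h; exact h.ne rfl
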